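/- Let I ⊂ S = K[x_1,…,x_n] be a monomial complete intersection ideal minimally generated by 3 monomials. Then sdepth I = n − 1. -/

import Mathlib

open MvPolynomial

namespace StanleyPaper

variable {n : ℕ} {K : Type} [Field K]

/-- A monomial ideal: an ideal generated by monomials. -/
def IsMonomialIdeal (I : Ideal (MvPolynomial (Fin n) K)) : Prop :=
  ∃ A : Set (Fin n →₀ ℕ),
    I = Ideal.span ((fun a => (monomial a (1 : K) : MvPolynomial (Fin n) K)) '' A)

/-- The set of exponent vectors `a` with `x^a ∈ I \ J`. -/
def expSet (I J : Ideal (MvPolynomial (Fin n) K)) : Set (Fin n →₀ ℕ) :=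
  {a | (monomial a (1 : K) : MvPolynomial (Fin n) K) ∈ I ∧
    (monomial a (1 : K) : MvPolynomial (Fin n) K) ∉ J}

/-- The characteristic poset `P^g_{I/J}` of `I/J` with respect to `g`. -/
def charPoset (I J : Ideal (MvPolynomial (Fin n) K)) (g : Fin n →₀ ℕ) : Set (Fin n →₀ ℕ) :=
  {a | a ∈ expSet I J ∧ a ≤ g}

/-- `Z_b = { x_j : b(j) = g(j) }`. -/
def Zset (g b : Fin n →₀ ℕ) : Finset (Fin n) :=
  Finset.univ.filter fun j => b j = g j

/-- `ρ(b) = |Z_b|`. -/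
def rho (g b : Fin n →₀ ℕ) : ℕ := (Zset g b).card

/-- The Stanley space `x^c K[Z]`, as a `K`-subspace of `S = K[x_1,…,x_n]`. -/
noncomputable def stanleySpace (K : Type) [Field K] (c : Fin n →₀ ℕ) (Z : Finset (Fin n)) :
    Submodule K (MvPolynomial (Fin n) K) :=
  Submodule.span K
    ((fun a => (monomial a (1 : K) : MvPolynomial (Fin n) K)) ''
      {a | c ≤ a ∧ ∀ j ∉ Z, a j = c j})

/-- The `K`-span of the monomials of `I \ J`; this is the standard model for the
`ℤⁿ`-graded `K`-vector space `I/J`. -/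
noncomputable def quotSpace (I J : Ideal (MvPolynomial (Fin n) K)) : Submodule K (MvPolynomial (Fin n) K) :=
  Submodule.span K ((fun a => (monomial a (1 : K) : MvPolynomial (Fin n) K)) '' expSet I J)

/-- The `K`-span of the monomials of `J`. -/
noncomputable def Jspan (J : Ideal (MvPolynomial (Fin n) K)) : Submodule K (MvPolynomial (Fin n) K) :=
  Submodule.span K ((fun a => (monomial a (1 : K) : MvPolynomial (Fin n) K)) ''
    {a | (monomial a (1 : K) : MvPolynomial (Fin n) K) ∈ J})

/-- A (graded) `K`-subspace `W` of the model of `I/J` corresponds to an (`ℤⁿ`-graded)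
`S`-submodule of `I/J` iff it is stable under multiplication by the variables, modulo `J`. -/
def IsSSubmoduleModJ (J : Ideal (MvPolynomial (Fin n) K))
    (W : Submodule K (MvPolynomial (Fin n) K)) : Prop :=
  ∀ j : Fin n, ∀ p ∈ W, (X j : MvPolynomial (Fin n) K) * p ∈ W ⊔ Jspan J

/-- A partition of a (finite) subposet `P` of `ℕⁿ` into intervals `[c i, d i]`. -/
structure IntervalPartition (P : Set (Fin n →₀ ℕ)) where
  r : ℕ
  c : Fin r → (Fin n →₀ ℕ)
  d : Fin r → (Fin n →₀ ℕ)
  le : ∀ i, c i ≤ d i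
  mem_c : ∀ i, c i ∈ P
  mem_d : ∀ i, d i ∈ P
  sub : ∀ i, Set.Icc (c i) (d i) ⊆ P
  cover : ∀ a ∈ P, ∃ i, a ∈ Set.Icc (c i) (d i)
  disj : ∀ i j, i ≠ j → Disjoint (Set.Icc (c i) (d i)) (Set.Icc (c j) (d j))

/-- The inner index set of the `i`-th interval: all `c' ∈ [c i, d i]` with
`c'(j) = c i (j)` for all `j` with `x_j ∈ Z_{d i}`. -/
def IntervalPartition.innerSet {P : Set (Fin n →₀ ℕ)} (Pt : IntervalPartition P)
    (g : Fin n →₀ ℕ) (i : Fin Pt.r) : Set (Fin n →₀ ℕ) :=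
  {c' | c' ∈ Set.Icc (Pt.c i) (Pt.d i) ∧ ∀ j ∈ Zset g (Pt.d i), c' j = Pt.c i j}

/-- The index set of the Stanley decomposition `D(Pt)` associated to a partition `Pt`. -/
def IntervalPartition.DPIdx {P : Set (Fin n →₀ ℕ)} (Pt : IntervalPartition P)
    (g : Fin n →₀ ℕ) : Type :=
  Σ i : Fin Pt.r, Pt.innerSet g i

/-- The family of Stanley spaces of the decomposition `D(Pt)`:
the summand at `(i, c')` is `x^{c'} K[Z_{d i}]`. -/
noncomputable def IntervalPartition.DPfam (K : Type) [Field K] {P : Set (Fin n →₀ ℕ)}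
    (Pt : IntervalPartition P) (g : Fin n →₀ ℕ) (x : Pt.DPIdx g) :
    Submodule K (MvPolynomial (Fin n) K) :=
  stanleySpace K (x.2 : Fin n →₀ ℕ) (Zset g (Pt.d x.1))

/-- `sdepth D(Pt) = min { ρ(d i) }`. -/
noncomputable def IntervalPartition.sdepthDP {P : Set (Fin n →₀ ℕ)} (Pt : IntervalPartition P)
    (g : Fin n →₀ ℕ) : ℕ :=
  sInf {k | ∃ i : Fin Pt.r, k = rho g (Pt.d i)}

/-- The property that the partial unions `⋃_{i < t} [c i, d i]` are poset ideals
of the characteristic poset, for all `t`. -/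
def IntervalPartition.InitialsArePosetIdeals {P : Set (Fin n →₀ ℕ)}
    (Pt : IntervalPartition P) : Prop :=
  ∀ t : ℕ, ∀ a b : Fin n →₀ ℕ,
    (∃ i : Fin Pt.r, (i : ℕ) < t ∧ a ∈ Set.Icc (Pt.c i) (Pt.d i)) → b ∈ P → b ≤ a →
      ∃ i : Fin Pt.r, (i : ℕ) < t ∧ b ∈ Set.Icc (Pt.c i) (Pt.d i)

/-- The family `(x^{u i} K[Z i])_{i : ι}` is a Stanley decomposition of `I/J`:
each Stanley space is a free `K[Z i]`-module (its natural monomial basis is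
`K`-linearly independent), the spaces are independent, and they sum to `I/J`. -/
def IsStanleyDecompOf (I J : Ideal (MvPolynomial (Fin n) K)) {ι : Type}
    (u : ι → (Fin n →₀ ℕ)) (Z : ι → Finset (Fin n)) : Prop :=
  (∀ i, LinearIndependent K fun e : {e : Fin n →₀ ℕ // ∀ j ∉ Z i, e j = 0} =>
    (monomial (u i + (e : Fin n →₀ ℕ)) (1 : K) : MvPolynomial (Fin n) K)) ∧
  iSupIndep (fun i => stanleySpace K (u i) (Z i)) ∧
  (⨆ i, stanleySpace K (u i) (Z i)) = quotSpace I J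

/-- A (finite) Stanley decomposition of `I/J`. -/
structure StanleyDec (I J : Ideal (MvPolynomial (Fin n) K)) where
  m : ℕ
  u : Fin m → (Fin n →₀ ℕ)
  Z : Fin m → Finset (Fin n)
  isDecomp : IsStanleyDecompOf I J u Z

/-- The Stanley depth of a Stanley decomposition: `min |Z i|`. -/
noncomputable def StanleyDec.sdepth {I J : Ideal (MvPolynomial (Fin n) K)} (D : StanleyDec I J) : ℕ :=
  sInf {k | ∃ i, k = (D.Z i).card}

/-- The Stanley depth of `I/J`. -/
noncomputable def sdepthQ (I J : Ideal (MvPolynomial (Fin n) K)) : ℕ :=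
  sSup {k | ∃ D : StanleyDec I J, k = D.sdepth}

/-- A Stanley decomposition of `I/J` is induced by a prime filtration iff its Stanley
spaces can be ordered so that all partial sums are (`ℤⁿ`-graded) `S`-submodules of `I/J`. -/
def StanleyDec.InducedByPrimeFiltration {I J : Ideal (MvPolynomial (Fin n) K)}
    (D : StanleyDec I J) : Prop :=
  ∃ σ : Equiv.Perm (Fin D.m), ∀ t : ℕ,
    IsSSubmoduleModJ J
      (⨆ i : Fin D.m, ⨆ _ : (σ i : ℕ) < t, stanleySpace K (D.u i) (D.Z i))

/-- `D(Pt)` is induced by a prime filtration: its Stanley spaces can be ordered so that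
all partial sums are (`ℤⁿ`-graded) `S`-submodules of `I/J`. -/
def IntervalPartition.DPInducedByPrimeFiltration (J : Ideal (MvPolynomial (Fin n) K))
    {P : Set (Fin n →₀ ℕ)} (Pt : IntervalPartition P) (g : Fin n →₀ ℕ) : Prop :=
  ∃ (N : ℕ) (e : Fin N → Pt.DPIdx g), Function.Bijective e ∧ ∀ t : ℕ,
    IsSSubmoduleModJ J (⨆ s : Fin N, ⨆ _ : (s : ℕ) < t, Pt.DPfam K g (e s))

/-- A monomial prime ideal: an ideal generated by a subset of the variables. -/
def IsMonomialPrime (P : Ideal (MvPolynomial (Fin n) K)) : Prop :=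
  ∃ V : Finset (Fin n), P = Ideal.span ((fun j => (X j : MvPolynomial (Fin n) K)) '' ↑V)

/-- A prime filtration of `I/J` (in the monomial model): a chain
`0 = W 0 ⊂ W 1 ⊂ ⋯ ⊂ W m = I/J` of `ℤⁿ`-graded `S`-submodules of `I/J` such that
`W (i+1) / W i ≅ (S/P i)(-a i)` with `P i` a monomial prime ideal. -/
structure QPrimeFiltration (I J : Ideal (MvPolynomial (Fin n) K)) where
  m : ℕ
  W : Fin (m + 1) → Submodule K (MvPolynomial (Fin n) K)
  a : Fin m → (Fin n →₀ ℕ)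
  P : Fin m → Ideal (MvPolynomial (Fin n) K)
  bot : W 0 = ⊥
  top : W (Fin.last m) = quotSpace I J
  graded : ∀ i, ∃ E : Set (Fin n →₀ ℕ),
    W i = Submodule.span K ((fun a => (monomial a (1 : K) : MvPolynomial (Fin n) K)) '' E)
  stable : ∀ i, IsSSubmoduleModJ J (W i)
  amem : ∀ i, a i ∈ expSet I J
  gen : ∀ i, W i.succ = W i.castSucc ⊔
    Submodule.span K ((fun e => (monomial e (1 : K) : MvPolynomial (Fin n) K)) ''
      {e | a i ≤ e ∧ (monomial e (1 : K) : MvPolynomial (Fin n) K) ∉ J})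
  ann : ∀ i, ∀ s : MvPolynomial (Fin n) K,
    s * monomial (a i) (1 : K) ∈ W i.castSucc ⊔ Jspan J ↔ s ∈ P i
  isPrime : ∀ i, IsMonomialPrime (P i)

/-- `fdepth ℱ = min { dim S/P : P ∈ supp ℱ }`. -/
noncomputable def QPrimeFiltration.fdepth {I J : Ideal (MvPolynomial (Fin n) K)}
    (F : QPrimeFiltration I J) : WithBot ℕ∞ :=
  ⨅ i : Fin F.m, ringKrullDim (MvPolynomial (Fin n) K ⧸ F.P i)

/-- `fdepth I/J = max { fdepth ℱ : ℱ a prime filtration of I/J }`. -/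
noncomputable def fdepthQ (I J : Ideal (MvPolynomial (Fin n) K)) : WithBot ℕ∞ :=
  ⨆ F : QPrimeFiltration I J, F.fdepth

/-- The graded maximal ideal `(x_1, …, x_n)`. -/
noncomputable def maxIdeal (n : ℕ) (K : Type) [Field K] : Ideal (MvPolynomial (Fin n) K) :=
  Ideal.span (Set.range (X : Fin n → MvPolynomial (Fin n) K))

/-- The depth of a module over `S = K[x_1,…,x_n]` with respect to the graded maximal
ideal: the maximal length of an `M`-regular sequence of elements of `(x_1,…,x_n)`. -/
noncomputable def moduleDepth (n : ℕ) (K : Type) [Field K] (M : Type)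
    [AddCommGroup M] [Module (MvPolynomial (Fin n) K) M] : ℕ :=
  sSup {r | ∃ rs : List (MvPolynomial (Fin n) K), rs.length = r ∧
    (∀ s ∈ rs, s ∈ maxIdeal n K) ∧ RingTheory.Sequence.IsRegular M rs}

/-- The `S`-module `I/J`. -/
abbrev QuotMod (I J : Ideal (MvPolynomial (Fin n) K)) :=
  ↥I ⧸ (Submodule.comap I.subtype J)

/-- The K-span of the monomials with exponents in `E`. -/
noncomputable def msupp (K : Type) [Field K] {n : ℕ} (E : Set (Fin n →₀ ℕ)) :
    Submodule K (MvPolynomial (Fin n) K) :=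
  Submodule.span K ((fun a => (monomial a (1 : K) : MvPolynomial (Fin n) K)) '' E)

/-- The submodule of polynomials with coefficients supported in `E`. -/
def coeffSupported (K : Type) [Field K] {n : ℕ} (E : Set (Fin n →₀ ℕ)) :
    Submodule K (MvPolynomial (Fin n) K) where
  carrier := {p | ∀ d, coeff d p ≠ 0 → d ∈ E}
  add_mem' := by
    intro p q hp hq d hd
    by_cases h : coeff d p = 0
    · exact hq d (by rwa [coeff_add, h, zero_add] at hd)
    · exact hp d h
  zero_mem' := by intro d hd; simp at hd
  smul_mem' := by
    intro r p hp d hd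
    apply hp d
    intro h
    rw [coeff_smul, h, smul_zero] at hd
    exact hd rfl

lemma msupp_eq (E : Set (Fin n →₀ ℕ)) : msupp K E = coeffSupported K E := by
  apply le_antisymm
  · rw [msupp, Submodule.span_le]
    rintro p ⟨e, he, rfl⟩
    intro d hd
    rw [coeff_monomial] at hd
    split_ifs at hd with h
    · exact h ▸ he
    · exact absurd rfl hd
  · intro p hp
    rw [p.as_sum]
    apply Submodule.sum_mem
    intro v hv
    have hvE : v ∈ E := hp v (mem_support_iff.mp hv)
    have : monomial v (coeff v p) = (coeff v p) • monomial v (1 : K) := by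
      rw [smul_monomial, smul_eq_mul, mul_one]
    rw [this]
    exact Submodule.smul_mem _ _ (Submodule.subset_span ⟨v, hvE, rfl⟩)

lemma monomial_mem_msupp {E : Set (Fin n →₀ ℕ)} {d : Fin n →₀ ℕ} :
    (monomial d (1 : K) : MvPolynomial (Fin n) K) ∈ msupp K E ↔ d ∈ E := by
  constructor
  · intro h
    rw [msupp_eq] at h
    exact h d (by simp)
  · intro h
    exact Submodule.subset_span ⟨d, h, rfl⟩

lemma msupp_mono {E F : Set (Fin n →₀ ℕ)} (h : E ⊆ F) : msupp K E ≤ msupp (n := n) K F :=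
  Submodule.span_mono (Set.image_mono h)

lemma msupp_injective {E F : Set (Fin n →₀ ℕ)} (h : msupp K E = msupp (n := n) K F) : E = F := by
  ext d
  rw [← monomial_mem_msupp (K := K), ← monomial_mem_msupp (K := K), h]

lemma msupp_iSup {ι : Sort*} (E : ι → Set (Fin n →₀ ℕ)) :
    (⨆ i, msupp K (E i)) = msupp K (⋃ i, E i) := by
  simp only [msupp, Set.image_iUnion, Submodule.span_iUnion]

lemma msupp_disjoint {E F : Set (Fin n →₀ ℕ)} (h : Disjoint E F) :
    Disjoint (msupp K E) (msupp (n := n) K F) := by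
  rw [Submodule.disjoint_def]
  intro p hpE hpF
  rw [msupp_eq] at hpE hpF
  ext d
  rw [coeff_zero]
  by_contra hd
  exact (Set.disjoint_left.mp h (hpE d hd)) (hpF d hd)

lemma msupp_iSupIndep {ι : Type*} (E : ι → Set (Fin n →₀ ℕ))
    (h : Pairwise (Function.onFun Disjoint E)) : iSupIndep (fun i => msupp K (E i)) := by
  intro i
  have h1 : (⨆ (j) (_ : j ≠ i), msupp K (E j)) ≤ msupp K (⋃ (j) (_ : j ≠ i), E j) := by
    apply iSup₂_le
    intro j hj
    refine msupp_mono ?_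
    intro e he
    simp only [Set.mem_iUnion]
    exact ⟨j, hj, he⟩
  refine Disjoint.mono_right h1 (msupp_disjoint ?_)
  rw [Set.disjoint_left]
  rintro e heI hemem
  simp only [Set.mem_iUnion] at hemem
  obtain ⟨j, hj, hej⟩ := hemem
  exact Set.disjoint_left.mp (h (Ne.symm hj)) heI hej

lemma linearIndependent_shift_monomial (u : Fin n →₀ ℕ) (Z : Finset (Fin n)) :
    LinearIndependent K fun e : {e : Fin n →₀ ℕ // ∀ j ∉ Z, e j = 0} =>
      (monomial (u + (e : Fin n →₀ ℕ)) (1 : K) : MvPolynomial (Fin n) K) := by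
  have h := (MvPolynomial.basisMonomials (Fin n) K).linearIndependent
  have h2 := h.comp (fun e : {e : Fin n →₀ ℕ // ∀ j ∉ Z, e j = 0} => u + (e : Fin n →₀ ℕ))
    (fun e f hef => Subtype.ext (add_left_cancel hef))
  exact h2

/-- least failing coordinate -/
lemma exists_least_fail {v e : Fin n →₀ ℕ} (h : ¬ v ≤ e) :
    ∃ j : Fin n, e j < v j ∧ ∀ i, i < j → v i ≤ e i := by
  classical
  have hne : (Finset.univ.filter fun i => e i < v i).Nonempty := by
    by_contra hemp
    apply h
    rw [Finsupp.le_def]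
    intro i
    by_contra hi
    exact hemp ⟨i, Finset.mem_filter.mpr ⟨Finset.mem_univ _, not_le.mp hi⟩⟩
  set F := Finset.univ.filter fun i => e i < v i
  refine ⟨F.min' hne, (Finset.mem_filter.mp (F.min'_mem hne)).2, ?_⟩
  intro i hi
  by_contra hvi
  exact absurd hi (not_lt.mpr (F.min'_le i
    (Finset.mem_filter.mpr ⟨Finset.mem_univ _, not_le.mp hvi⟩)))

def SSet (u : Fin n →₀ ℕ) (Z : Finset (Fin n)) : Set (Fin n →₀ ℕ) :=
  {e | u ≤ e ∧ ∀ j ∉ Z, e j = u j}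

noncomputable def pieceU (q p : Fin n →₀ ℕ) (j : Fin n) (t : ℕ) : Fin n →₀ ℕ :=
  q + p.filter (fun i => i < j) + Finsupp.single j t

def pieceE (q p : Fin n →₀ ℕ) (j : Fin n) (t : ℕ) : Set (Fin n →₀ ℕ) :=
  {e | q ≤ e ∧ e j = t ∧ ∀ i, i < j → p i ≤ e i}

lemma pieceU_apply (q p : Fin n →₀ ℕ) (j : Fin n) (t : ℕ) (i : Fin n) :
    pieceU q p j t i = q i + (if i < j then p i else 0) + (if j = i then t else 0) := by
  classical
  simp [pieceU, Finsupp.add_apply, Finsupp.filter_apply, Finsupp.single_apply]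

lemma SSet_piece (q p : Fin n →₀ ℕ) (hqp : ∀ i, q i = 0 ∨ p i = 0) {j : Fin n}
    (hj : p j ≠ 0) (t : ℕ) :
    SSet (pieceU q p j t) (Finset.univ.erase j) = pieceE q p j t := by
  have hqj : q j = 0 := (hqp j).resolve_right hj
  have hUj : pieceU q p j t j = t := by
    rw [pieceU_apply, hqj, if_neg (lt_irrefl j), if_pos rfl]
    omega
  ext e
  constructor
  · rintro ⟨h1, h2⟩
    have h1' := Finsupp.le_def.mp h1
    have hej : e j = t := by
      rw [h2 j (by simp), hUj]
    refine ⟨?_, hej, ?_⟩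
    · rw [Finsupp.le_def]
      intro i
      have := h1' i
      rw [pieceU_apply] at this
      omega
    · intro i hi
      have := h1' i
      rw [pieceU_apply, if_pos hi] at this
      omega
  · rintro ⟨hq, hej, hp⟩
    have hqe := Finsupp.le_def.mp hq
    constructor
    · rw [Finsupp.le_def]
      intro i
      rw [pieceU_apply]
      rcases eq_or_ne i j with rfl | hij
      · rw [if_neg (lt_irrefl i), if_pos rfl, hqj, hej]
        omega
      · rw [if_neg (show ¬ j = i from fun h => hij h.symm)]
        by_cases hlt : i < j
        · rw [if_pos hlt]
          have h1 := hp i hlt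
          have h2 := hqe i
          rcases hqp i with h0 | h0 <;> omega
        · rw [if_neg hlt]
          simpa using hqe i
    · intro i hi
      have hij : i = j := by simpa using hi
      subst hij
      rw [hUj, hej]

lemma mem_pieceE_ge {q p : Fin n →₀ ℕ} {j : Fin n} {t : ℕ} {e : Fin n →₀ ℕ}
    (h : e ∈ pieceE q p j t) : q ≤ e := h.1

lemma mem_pieceE_not_ge {q p : Fin n →₀ ℕ} {j : Fin n} {t : ℕ} {e : Fin n →₀ ℕ}
    (h : e ∈ pieceE q p j t) (ht : t < p j) : ¬ p ≤ e := by
  obtain ⟨-, hej, -⟩ := h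
  intro hle
  have := Finsupp.le_def.mp hle j
  omega

lemma pieceE_disjoint {q p : Fin n →₀ ℕ} {j j' : Fin n} {t t' : ℕ}
    (h : j ≠ j' ∨ t ≠ t') (ht : t < p j) (ht' : t' < p j') :
    Disjoint (pieceE q p j t) (pieceE q p j' t') := by
  rw [Set.disjoint_left]
  rintro e ⟨_, hej, hpe⟩ ⟨_, hej', hpe'⟩
  rcases lt_trichotomy j j' with hlt | heq | hlt
  · have := hpe' j hlt
    omega
  · subst heq
    rcases h with h | h
    · exact h rfl
    · omega
  · have := hpe j' hlt
    omega

lemma mem_pieceE_of_not_ge {q p e : Fin n →₀ ℕ} (hq : q ≤ e) (hne : ¬ p ≤ e) :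
    ∃ j : Fin n, e j < p j ∧ e ∈ pieceE q p j (e j) := by
  classical
  have hne' : (Finset.univ.filter fun i => e i < p i).Nonempty := by
    by_contra hemp
    apply hne
    rw [Finsupp.le_def]
    intro i
    by_contra hi
    exact hemp ⟨i, Finset.mem_filter.mpr ⟨Finset.mem_univ _, not_le.mp hi⟩⟩
  set F := Finset.univ.filter fun i => e i < p i with hF
  have hjmem := (Finset.mem_filter.mp (F.min'_mem hne')).2
  refine ⟨F.min' hne', hjmem, hq, rfl, ?_⟩
  intro i hi
  by_contra hpi
  exact absurd hi (not_lt.mpr (F.min'_le i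
    (Finset.mem_filter.mpr ⟨Finset.mem_univ _, not_le.mp hpi⟩)))


lemma stanleySpace_eq_msupp (u : Fin n →₀ ℕ) (Z : Finset (Fin n)) :
    stanleySpace K u Z = msupp K (SSet u Z) := rfl

lemma quotSpace_eq_msupp (I J : Ideal (MvPolynomial (Fin n) K)) :
    quotSpace I J = msupp K (expSet I J) := rfl

/-- The set of exponents of monomials in the ideal `(x^a, x^b, x^c)`. -/
def MSet (a b c : Fin n →₀ ℕ) : Set (Fin n →₀ ℕ) := {e | a ≤ e ∨ b ≤ e ∨ c ≤ e}

section Tri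

variable (a b c : Fin n →₀ ℕ)

/-- The index type for the Stanley decomposition of `(x^a, x^b, x^c)`. -/
def TriIdx : Type :=
  Unit ⊕ ((Σ j : Fin n, Fin (c j)) ⊕ ((Σ j : Fin n, Fin (a j)) ⊕ (Σ j : Fin n, Fin (b j))))

instance : Fintype (TriIdx a b c) := by unfold TriIdx; infer_instance

noncomputable def triU : TriIdx a b c → (Fin n →₀ ℕ)
  | .inl _ => a + b + c
  | .inr (.inl ⟨j, t⟩) => pieceU a c j t
  | .inr (.inr (.inl ⟨j, t⟩)) => pieceU b a j t
  | .inr (.inr (.inr ⟨j, t⟩)) => pieceU c b j t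

def triZ : TriIdx a b c → Finset (Fin n)
  | .inl _ => Finset.univ
  | .inr (.inl ⟨j, _⟩) => Finset.univ.erase j
  | .inr (.inr (.inl ⟨j, _⟩)) => Finset.univ.erase j
  | .inr (.inr (.inr ⟨j, _⟩)) => Finset.univ.erase j

def triE : TriIdx a b c → Set (Fin n →₀ ℕ)
  | .inl _ => {e | a + b + c ≤ e}
  | .inr (.inl ⟨j, t⟩) => pieceE a c j t
  | .inr (.inr (.inl ⟨j, t⟩)) => pieceE b a j t
  | .inr (.inr (.inr ⟨j, t⟩)) => pieceE c b j t

variable {a b c}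
variable (hab' : ∀ i, a i = 0 ∨ b i = 0) (hac' : ∀ i, a i = 0 ∨ c i = 0)
  (hbc' : ∀ i, b i = 0 ∨ c i = 0)

include hab' hac' hbc' in
lemma SSet_tri (x : TriIdx a b c) :
    SSet (triU a b c x) (triZ a b c x) = triE a b c x := by
  match x with
  | .inl _ =>
    ext e
    show (a + b + c ≤ e ∧ ∀ j ∉ Finset.univ, e j = (a + b + c) j) ↔ a + b + c ≤ e
    simp
  | .inr (.inl ⟨j, t⟩) =>
    exact SSet_piece a c hac' (by have := t.isLt; omega) t
  | .inr (.inr (.inl ⟨j, t⟩)) =>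
    exact SSet_piece b a (fun i => (hab' i).symm) (by have := t.isLt; omega) t
  | .inr (.inr (.inr ⟨j, t⟩)) =>
    exact SSet_piece c b (fun i => (hbc' i).symm) (by have := t.isLt; omega) t

lemma mem_of_add_le {e : Fin n →₀ ℕ} (h : a + b + c ≤ e) : a ≤ e ∧ b ≤ e ∧ c ≤ e := by
  refine ⟨?_, ?_, ?_⟩ <;> rw [Finsupp.le_def] <;> intro i <;>
    have h1 := Finsupp.le_def.mp h i <;>
    simp only [Finsupp.add_apply] at h1 <;> omega

include hab' hac' hbc' in
lemma triE_cover {e : Fin n →₀ ℕ} (he : e ∈ MSet a b c) :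
    ∃ x : TriIdx a b c, e ∈ triE a b c x := by
  by_cases hα : a ≤ e
  · by_cases hγ : c ≤ e
    · by_cases hβ : b ≤ e
      · refine ⟨.inl (), ?_⟩
        show a + b + c ≤ e
        rw [Finsupp.le_def]
        intro i
        have h1 := Finsupp.le_def.mp hα i
        have h2 := Finsupp.le_def.mp hβ i
        have h3 := Finsupp.le_def.mp hγ i
        rcases hab' i with h | h <;> rcases hac' i with h' | h' <;> rcases hbc' i with h'' | h'' <;>
          simp only [Finsupp.add_apply] <;> omega
      · obtain ⟨j, hj, hmem⟩ := mem_pieceE_of_not_ge hγ hβ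
        exact ⟨.inr (.inr (.inr ⟨j, ⟨e j, hj⟩⟩)), hmem⟩
    · obtain ⟨j, hj, hmem⟩ := mem_pieceE_of_not_ge hα hγ
      exact ⟨.inr (.inl ⟨j, ⟨e j, hj⟩⟩), hmem⟩
  · rcases he with h | hβ | hγ
    · exact absurd h hα
    · obtain ⟨j, hj, hmem⟩ := mem_pieceE_of_not_ge hβ hα
      exact ⟨.inr (.inr (.inl ⟨j, ⟨e j, hj⟩⟩)), hmem⟩
    · by_cases hβ : b ≤ e
      · obtain ⟨j, hj, hmem⟩ := mem_pieceE_of_not_ge hβ hα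
        exact ⟨.inr (.inr (.inl ⟨j, ⟨e j, hj⟩⟩)), hmem⟩
      · obtain ⟨j, hj, hmem⟩ := mem_pieceE_of_not_ge hγ hβ
        exact ⟨.inr (.inr (.inr ⟨j, ⟨e j, hj⟩⟩)), hmem⟩

include hab' hac' hbc' in
lemma triE_subset (x : TriIdx a b c) : triE a b c x ⊆ MSet a b c := by
  match x with
  | .inl _ =>
    intro e he
    exact Or.inl (mem_of_add_le he).1
  | .inr (.inl ⟨j, t⟩) => exact fun e he => Or.inl (mem_pieceE_ge he)
  | .inr (.inr (.inl ⟨j, t⟩)) => exact fun e he => Or.inr (Or.inl (mem_pieceE_ge he))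
  | .inr (.inr (.inr ⟨j, t⟩)) => exact fun e he => Or.inr (Or.inr (mem_pieceE_ge he))

include hab' hac' hbc' in
lemma triE_pairwise : Pairwise (Function.onFun Disjoint (triE a b c)) := by
  have key : ∀ (q p : Fin n →₀ ℕ) (j j' : Fin n) (t : Fin (p j)) (t' : Fin (p j')),
      ((⟨j, t⟩ : Σ i : Fin n, Fin (p i)) ≠ ⟨j', t'⟩) →
      Disjoint (pieceE q p j t) (pieceE q p j' t') := by
    intro q p j j' t t' hne
    by_cases hj : j = j'
    · subst hj
      refine pieceE_disjoint (Or.inr ?_) t.isLt t'.isLt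
      intro hv
      exact hne (by rw [Fin.val_injective hv])
    · exact pieceE_disjoint (Or.inl hj) t.isLt t'.isLt
  intro x y hxy
  show Disjoint (triE a b c x) (triE a b c y)
  obtain u | ⟨j, t⟩ | ⟨j, t⟩ | ⟨j, t⟩ := x <;>
    obtain u' | ⟨j', t'⟩ | ⟨j', t'⟩ | ⟨j', t'⟩ := y
  · exact absurd rfl hxy
  · rw [Set.disjoint_left]
    intro e he he'
    exact mem_pieceE_not_ge he' t'.isLt (mem_of_add_le he).2.2
  · rw [Set.disjoint_left]
    intro e he he'
    exact mem_pieceE_not_ge he' t'.isLt (mem_of_add_le he).1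
  · rw [Set.disjoint_left]
    intro e he he'
    exact mem_pieceE_not_ge he' t'.isLt (mem_of_add_le he).2.1
  · rw [Set.disjoint_left]
    intro e he he'
    exact mem_pieceE_not_ge he t.isLt (mem_of_add_le he').2.2
  · exact key a c j j' t t' (fun h => hxy (by rw [show (⟨j,t⟩ : Σ j : Fin n, Fin (c j)) = ⟨j',t'⟩ from h]))
  · rw [Set.disjoint_left]
    intro e he he'
    exact mem_pieceE_not_ge he' t'.isLt (mem_pieceE_ge he)
  · rw [Set.disjoint_left]
    intro e he he'
    exact mem_pieceE_not_ge he t.isLt (mem_pieceE_ge he')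
  · rw [Set.disjoint_left]
    intro e he he'
    exact mem_pieceE_not_ge he t.isLt (mem_of_add_le he').1
  · rw [Set.disjoint_left]
    intro e he he'
    exact mem_pieceE_not_ge he t.isLt (mem_pieceE_ge he')
  · exact key b a j j' t t' (fun h => hxy (by rw [show (⟨j,t⟩ : Σ j : Fin n, Fin (a j)) = ⟨j',t'⟩ from h]))
  · rw [Set.disjoint_left]
    intro e he he'
    exact mem_pieceE_not_ge he' t'.isLt (mem_pieceE_ge he)
  · rw [Set.disjoint_left]
    intro e he he'
    exact mem_pieceE_not_ge he t.isLt (mem_of_add_le he').2.1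
  · rw [Set.disjoint_left]
    intro e he he'
    exact mem_pieceE_not_ge he' t'.isLt (mem_pieceE_ge he)
  · rw [Set.disjoint_left]
    intro e he he'
    exact mem_pieceE_not_ge he t.isLt (mem_pieceE_ge he')
  · exact key c b j j' t t' (fun h => hxy (by rw [show (⟨j,t⟩ : Σ j : Fin n, Fin (b j)) = ⟨j',t'⟩ from h]))

end Tri

lemma expSet_eq_tri (a b c : Fin n →₀ ℕ) (I : Ideal (MvPolynomial (Fin n) K))
    (hI : I = Ideal.span {(monomial a (1 : K) : MvPolynomial (Fin n) K),
      (monomial b (1 : K) : MvPolynomial (Fin n) K),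
      (monomial c (1 : K) : MvPolynomial (Fin n) K)}) :
    expSet I (⊥ : Ideal (MvPolynomial (Fin n) K)) = MSet a b c := by
  classical
  ext e
  have himg : ({(monomial a (1 : K) : MvPolynomial (Fin n) K),
      monomial b (1 : K), monomial c (1 : K)} : Set (MvPolynomial (Fin n) K))
      = (fun s => (monomial s (1 : K) : MvPolynomial (Fin n) K)) '' {a, b, c} := by
    simp [Set.image_insert_eq]
  have hbot : (monomial e (1 : K) : MvPolynomial (Fin n) K) ∉
      (⊥ : Ideal (MvPolynomial (Fin n) K)) := by
    rw [Ideal.mem_bot]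
    simp [monomial_eq_zero]
  constructor
  · rintro ⟨hmem, -⟩
    rw [hI, himg, mem_ideal_span_monomial_image] at hmem
    have := hmem e (by rw [support_monomial, if_neg (one_ne_zero (α := K))]; simp)
    simpa [MSet] using this
  · intro hmem
    refine ⟨?_, hbot⟩
    rw [hI, himg, mem_ideal_span_monomial_image]
    intro xi hxi
    rw [support_monomial, if_neg (one_ne_zero (α := K))] at hxi
    simp only [Finset.mem_singleton] at hxi
    subst hxi
    rcases hmem with h | h | h
    · exact ⟨a, by simp, h⟩
    · exact ⟨b, by simp, h⟩
    · exact ⟨c, by simp, h⟩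

lemma exists_dec (a b c : Fin n →₀ ℕ)
    (hc : c ≠ 0)
    (hab' : ∀ i, a i = 0 ∨ b i = 0) (hac' : ∀ i, a i = 0 ∨ c i = 0)
    (hbc' : ∀ i, b i = 0 ∨ c i = 0)
    (I : Ideal (MvPolynomial (Fin n) K))
    (hI : I = Ideal.span {(monomial a (1 : K) : MvPolynomial (Fin n) K),
      (monomial b (1 : K) : MvPolynomial (Fin n) K),
      (monomial c (1 : K) : MvPolynomial (Fin n) K)}) :
    ∃ D : StanleyDec I (⊥ : Ideal (MvPolynomial (Fin n) K)), D.sdepth = n - 1 := by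
  classical
  obtain ⟨jc, hjc⟩ : ∃ j, c j ≠ 0 := by
    by_contra h
    push_neg at h
    exact hc (Finsupp.ext fun i => h i)
  set eqv := (Fintype.equivFin (TriIdx a b c)).symm with heqv
  have hst : ∀ i, stanleySpace K (triU a b c (eqv i)) (triZ a b c (eqv i))
      = msupp K (triE a b c (eqv i)) := fun i => by
    rw [stanleySpace_eq_msupp, SSet_tri hab' hac' hbc']
  refine ⟨⟨Fintype.card (TriIdx a b c), fun i => triU a b c (eqv i),
    fun i => triZ a b c (eqv i), ?_, ?_, ?_⟩, ?_⟩
  · exact fun i => linearIndependent_shift_monomial _ _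
  · have : (fun i => stanleySpace K (triU a b c (eqv i)) (triZ a b c (eqv i)))
        = fun i => msupp K (triE a b c (eqv i)) := funext hst
    rw [this]
    exact msupp_iSupIndep _
      (fun i j hij => triE_pairwise hab' hac' hbc' (eqv.injective.ne hij))
  · have h1 : (⨆ i, stanleySpace K (triU a b c (eqv i)) (triZ a b c (eqv i)))
        = ⨆ i, msupp K (triE a b c (eqv i)) := by
      exact iSup_congr hst
    rw [h1, msupp_iSup]
    have h2 : (⋃ i, triE a b c (eqv i)) = MSet a b c := by
      apply Set.Subset.antisymm
      · exact Set.iUnion_subset fun i => triE_subset hab' hac' hbc' _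
      · intro e he
        obtain ⟨x, hx⟩ := triE_cover hab' hac' hbc' he
        refine Set.mem_iUnion.mpr ⟨eqv.symm x, ?_⟩
        rwa [Equiv.apply_symm_apply]
    rw [h2, quotSpace_eq_msupp, expSet_eq_tri a b c I hI]
  · -- sdepth computation
    show sInf {k | ∃ i, k = (triZ a b c (eqv i)).card} = n - 1
    have hcard : ∀ x : TriIdx a b c, (triZ a b c x).card = n ∨ (triZ a b c x).card = n - 1 := by
      intro x
      obtain u | ⟨j, t⟩ | ⟨j, t⟩ | ⟨j, t⟩ := x
      · left; simp [triZ]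
      all_goals right
      all_goals show (Finset.univ.erase j).card = n - 1
      all_goals rw [Finset.card_erase_of_mem (Finset.mem_univ _)]
      all_goals simp
    have hmem : n - 1 ∈ {k | ∃ i, k = (triZ a b c (eqv i)).card} := by
      set x0 : TriIdx a b c := .inr (.inl ⟨jc, ⟨0, Nat.pos_of_ne_zero hjc⟩⟩) with hx0
      refine ⟨eqv.symm x0, ?_⟩
      rw [Equiv.apply_symm_apply]
      show n - 1 = (Finset.univ.erase jc).card
      rw [Finset.card_erase_of_mem (Finset.mem_univ _)]
      simp
    apply le_antisymm
    · exact Nat.sInf_le hmem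
    · apply le_csInf ⟨_, hmem⟩
      rintro k ⟨i, rfl⟩
      rcases hcard (eqv i) with h | h <;> omega

lemma sdepth_le (a b c : Fin n →₀ ℕ)
    (ha : a ≠ 0) (hb : b ≠ 0) (hc : c ≠ 0)
    (hab' : ∀ i, a i = 0 ∨ b i = 0) (hac' : ∀ i, a i = 0 ∨ c i = 0)
    (hbc' : ∀ i, b i = 0 ∨ c i = 0)
    (I : Ideal (MvPolynomial (Fin n) K))
    (hI : I = Ideal.span {(monomial a (1 : K) : MvPolynomial (Fin n) K),
      (monomial b (1 : K) : MvPolynomial (Fin n) K),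
      (monomial c (1 : K) : MvPolynomial (Fin n) K)})
    (D : StanleyDec I (⊥ : Ideal (MvPolynomial (Fin n) K))) : D.sdepth ≤ n - 1 := by
  classical
  obtain ⟨ja, hja⟩ : ∃ j, a j ≠ 0 := by
    by_contra h; push_neg at h; exact ha (Finsupp.ext fun i => h i)
  obtain ⟨jb, hjb⟩ : ∃ j, b j ≠ 0 := by
    by_contra h; push_neg at h; exact hb (Finsupp.ext fun i => h i)
  obtain ⟨hli, hind, hsup⟩ := D.isDecomp
  by_contra hgt
  push_neg at hgt
  have hn : 1 ≤ n := ja.pos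
  have hsd : n ≤ D.sdepth := by omega
  have hZ : ∀ i, D.Z i = Finset.univ := by
    intro i
    have h1 : D.sdepth ≤ (D.Z i).card := Nat.sInf_le ⟨i, rfl⟩
    have h2 : (D.Z i).card ≤ n := by
      have := Finset.card_le_univ (D.Z i)
      simpa using this
    apply Finset.eq_univ_of_card
    simp only [Fintype.card_fin]
    omega
  have hstan : ∀ i, stanleySpace K (D.u i) (D.Z i) = msupp K {e | D.u i ≤ e} := by
    intro i
    rw [stanleySpace_eq_msupp]
    congr 1
    ext e
    simp [SSet, hZ i]
  have hU : (⋃ i, {e | D.u i ≤ e}) = MSet a b c := by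
    apply msupp_injective (K := K)
    rw [← msupp_iSup]
    have : (⨆ i, msupp K {e | D.u i ≤ e}) = ⨆ i, stanleySpace K (D.u i) (D.Z i) :=
      iSup_congr fun i => (hstan i).symm
    rw [this, hsup, quotSpace_eq_msupp, expSet_eq_tri a b c I hI]
  have hmemM : ∀ v : Fin n →₀ ℕ, v ∈ MSet a b c → ∃ i, D.u i ≤ v := by
    intro v hv
    rw [← hU] at hv
    simpa using hv
  have huM : ∀ i, D.u i ∈ MSet a b c := by
    intro i
    rw [← hU]
    exact Set.mem_iUnion.mpr ⟨i, Set.mem_setOf_eq ▸ le_rfl⟩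
  obtain ⟨i, hia⟩ := hmemM a (Or.inl le_rfl)
  obtain ⟨j, hjb'⟩ := hmemM b (Or.inr (Or.inl le_rfl))
  have huia : D.u i = a := by
    rcases huM i with h | h | h
    · exact le_antisymm hia h
    · exfalso
      have h1 := Finsupp.le_def.mp h jb
      have h2 := Finsupp.le_def.mp hia jb
      rcases hab' jb with h0 | h0 <;> omega
    · exfalso
      obtain ⟨jc, hjc⟩ : ∃ j, c j ≠ 0 := by
        by_contra hh; push_neg at hh; exact hc (Finsupp.ext fun i => hh i)
      have h1 := Finsupp.le_def.mp h jc
      have h2 := Finsupp.le_def.mp hia jc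
      rcases hac' jc with h0 | h0 <;> omega
  have hujb : D.u j = b := by
    rcases huM j with h | h | h
    · exfalso
      have h1 := Finsupp.le_def.mp h ja
      have h2 := Finsupp.le_def.mp hjb' ja
      rcases hab' ja with h0 | h0 <;> omega
    · exact le_antisymm hjb' h
    · exfalso
      obtain ⟨jc, hjc⟩ : ∃ j, c j ≠ 0 := by
        by_contra hh; push_neg at hh; exact hc (Finsupp.ext fun i => hh i)
      have h1 := Finsupp.le_def.mp h jc
      have h2 := Finsupp.le_def.mp hjb' jc
      rcases hbc' jc with h0 | h0 <;> omega
  have hij : i ≠ j := by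
    intro h
    rw [h, hujb] at huia
    rcases hab' ja with h0 | h0
    · exact hja h0
    · rw [← huia] at hja
      exact hja h0
  have hd : Disjoint (stanleySpace K (D.u i) (D.Z i)) (stanleySpace K (D.u j) (D.Z j)) :=
    hind.pairwiseDisjoint hij
  rw [hstan i, hstan j] at hd
  have hmem1 : (monomial (a + b) (1 : K) : MvPolynomial (Fin n) K) ∈ msupp K {e | D.u i ≤ e} := by
    rw [monomial_mem_msupp, huia]
    show a ≤ a + b
    rw [Finsupp.le_def]
    intro k
    simp [Finsupp.add_apply]
  have hmem2 : (monomial (a + b) (1 : K) : MvPolynomial (Fin n) K) ∈ msupp K {e | D.u j ≤ e} := by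
    rw [monomial_mem_msupp, hujb]
    show b ≤ a + b
    rw [Finsupp.le_def]
    intro k
    simp [Finsupp.add_apply]
  have := Submodule.disjoint_def.mp hd _ hmem1 hmem2
  rw [monomial_eq_zero] at this
  exact one_ne_zero this

/-- **Proposition.** A monomial complete intersection `I ⊆ K[x_1,…,x_n]` minimally
generated by three monomials (three pairwise coprime monomials) satisfies
`sdepth I = n - 1`. -/
theorem sdepth_of_three_generated_complete_intersection
    {n : ℕ} {K : Type} [Field K] (a b c : Fin n →₀ ℕ)
    (ha : a ≠ 0) (hb : b ≠ 0) (hc : c ≠ 0)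
    (hab : Disjoint a.support b.support) (hac : Disjoint a.support c.support)
    (hbc : Disjoint b.support c.support)
    (I : Ideal (MvPolynomial (Fin n) K))
    (hI : I = Ideal.span {(monomial a (1 : K) : MvPolynomial (Fin n) K),
      (monomial b (1 : K) : MvPolynomial (Fin n) K),
      (monomial c (1 : K) : MvPolynomial (Fin n) K)}) :
    sdepthQ I (⊥ : Ideal (MvPolynomial (Fin n) K)) = n - 1 := by
  classical
  have hab' : ∀ i, a i = 0 ∨ b i = 0 := by
    intro i
    by_contra h
    push_neg at h
    exact Finset.disjoint_left.mp hab (Finsupp.mem_support_iff.mpr h.1)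
      (Finsupp.mem_support_iff.mpr h.2)
  have hac' : ∀ i, a i = 0 ∨ c i = 0 := by
    intro i
    by_contra h
    push_neg at h
    exact Finset.disjoint_left.mp hac (Finsupp.mem_support_iff.mpr h.1)
      (Finsupp.mem_support_iff.mpr h.2)
  have hbc' : ∀ i, b i = 0 ∨ c i = 0 := by
    intro i
    by_contra h
    push_neg at h
    exact Finset.disjoint_left.mp hbc (Finsupp.mem_support_iff.mpr h.1)
      (Finsupp.mem_support_iff.mpr h.2)
  obtain ⟨D0, hD0⟩ := exists_dec a b c hc hab' hac' hbc' I hI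
  have hub : ∀ k ∈ {k | ∃ D : StanleyDec I (⊥ : Ideal (MvPolynomial (Fin n) K)),
      k = D.sdepth}, k ≤ n - 1 := by
    rintro k ⟨D, rfl⟩
    exact sdepth_le a b c ha hb hc hab' hac' hbc' I hI D
  show sSup {k | ∃ D : StanleyDec I (⊥ : Ideal (MvPolynomial (Fin n) K)), k = D.sdepth} = n - 1
  apply le_antisymm
  · exact csSup_le ⟨n - 1, ⟨D0, hD0.symm⟩⟩ hub
  · exact le_csSup ⟨n - 1, hub⟩ ⟨D0, hD0.symm⟩

end StanleyPaper
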